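/- Let H ⊆ [p]^m be a finite downward-closed class (if h ∈ H and g ∈ [p]^m satisfies g_i ≤ h_i for all i, then g ∈ H). Then the average k-degree of H is at most (k+1) times the k-exponential dimension of H. -/

import Mathlib

/-- The edge of the one-inclusion graph of `H ⊆ [p]^m` in direction `i` through `v`. -/
def edge {m p : ℕ} (H : Finset (Fin m → Fin p)) (i : Fin m) (v : Fin m → Fin p) :
    Finset (Fin m → Fin p) :=
  H.filter fun g => ∀ j, j ≠ i → g j = v j

lemma edge_injOn {m p : ℕ} (H : Finset (Fin m → Fin p)) (i : Fin m) (v : Fin m → Fin p) :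
    Set.InjOn (fun w : Fin m → Fin p => w i) ↑(edge H i v) := by
  intro w₁ h₁ w₂ h₂ h
  simp only [edge, Finset.coe_filter, Set.mem_setOf_eq] at h₁ h₂
  funext j
  by_cases hj : j = i
  · subst hj; exact h
  · rw [h₁.2 j hj, h₂.2 j hj]

lemma edge_card_le {m p : ℕ} (H : Finset (Fin m → Fin p)) (i : Fin m) (v : Fin m → Fin p) :
    (edge H i v).card ≤ p := by
  calc (edge H i v).card = ((edge H i v).image fun w => w i).card :=
        (Finset.card_image_of_injOn (edge_injOn H i v)).symm
    _ ≤ (Finset.univ : Finset (Fin p)).card := Finset.card_le_card (Finset.subset_univ _)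
    _ = p := by simp

lemma exists_big {m p k : ℕ} (H : Finset (Fin m → Fin p)) (i : Fin m) (v : Fin m → Fin p)
    (h : k < (edge H i v).card) : ∃ w ∈ edge H i v, k ≤ (w i : ℕ) := by
  by_contra hc
  push_neg at hc
  have h1 : (edge H i v).card = ((edge H i v).image fun w => w i).card :=
    (Finset.card_image_of_injOn (edge_injOn H i v)).symm
  have h2 : ((edge H i v).image fun w => w i).card ≤ k := by
    apply le_trans (Finset.card_le_card_of_injOn (fun x : Fin p => (x : ℕ))
      (t := Finset.range k) ?_ (fun a _ b _ hab => Fin.ext hab))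
    · simp
    · intro x hx
      simp only [Finset.mem_coe, Finset.mem_image] at hx
      obtain ⟨w, hw, rfl⟩ := hx
      simpa using hc w hw
  rw [h1] at h
  exact absurd h (not_lt.mpr h2)

lemma update_mem {m p k : ℕ} (H : Finset (Fin m → Fin p))
    (hdc : ∀ h ∈ H, ∀ g : Fin m → Fin p, (∀ i, g i ≤ h i) → g ∈ H)
    (i : Fin m) (v : Fin m → Fin p)
    (h : k < (edge H i v).card) (hkp : k < p) :
    Function.update v i ⟨k, hkp⟩ ∈ H := by
  obtain ⟨w, hw, hwk⟩ := exists_big H i v h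
  have hw' := Finset.mem_filter.mp hw
  apply hdc w hw'.1
  intro j
  by_cases hj : j = i
  · subst hj
    rw [Function.update_self, Fin.le_def]
    exact hwk
  · rw [Function.update_of_ne hj, (hw'.2 j hj)]

lemma step2 {m p k : ℕ} (H : Finset (Fin m → Fin p))
    (hdc : ∀ h ∈ H, ∀ g : Fin m → Fin p, (∀ i, g i ≤ h i) → g ∈ H)
    (hkp : k < p) (i : Fin m) :
    (H.filter fun v => k < (edge H i v).card).card
      ≤ (H.filter fun v => k ≤ (v i : ℕ)).card * (k + 1) := by
  have key := Finset.card_le_card_of_injOn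
    (s := H.filter fun v => k < (edge H i v).card)
    (t := (H.filter fun v => k ≤ (v i : ℕ)) ×ˢ (Finset.univ : Finset (Fin (k+1))))
    (fun v => if h : k ≤ (v i : ℕ) then (v, (⟨k, Nat.lt_succ_self k⟩ : Fin (k+1)))
          else (Function.update v i ⟨k, hkp⟩, ⟨(v i : ℕ), by omega⟩))
    ?_ ?_
  · simpa using key
  · intro v hv
    rw [Finset.mem_coe, Finset.mem_filter] at hv
    by_cases h : k ≤ (v i : ℕ)
    · simp only [h, dif_pos]
      exact Finset.mem_product.mpr ⟨Finset.mem_filter.mpr ⟨hv.1, h⟩, Finset.mem_univ _⟩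
    · simp only [h, dif_neg, not_false_iff]
      refine Finset.mem_product.mpr ⟨Finset.mem_filter.mpr ⟨update_mem H hdc i v hv.2 hkp, ?_⟩,
        Finset.mem_univ _⟩
      show k ≤ ((Function.update v i ⟨k, hkp⟩) i : ℕ)
      rw [Function.update_self]
  · intro v₁ h₁ v₂ h₂ heq
    simp only at heq
    split_ifs at heq with ha hb hb
    · exact (Prod.mk.injEq _ _ _ _ ▸ heq).1
    · exfalso
      have := congrArg (fun x => (x.2 : ℕ)) heq
      simp at this; omega
    · exfalso
      have := congrArg (fun x => (x.2 : ℕ)) heq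
      simp at this; omega
    · have h1 := congrArg Prod.fst heq
      have h2 := congrArg (fun x => (x.2 : ℕ)) heq
      simp only at h1 h2
      funext j
      by_cases hj : j = i
      · subst hj; exact Fin.ext h2
      · have := congrFun h1 j
        rwa [Function.update_of_ne hj, Function.update_of_ne hj] at this

lemma step1 {m p k : ℕ} (H : Finset (Fin m → Fin p))
    (hdc : ∀ h ∈ H, ∀ g : Fin m → Fin p, (∀ i, g i ≤ h i) → g ∈ H)
    (dE : ℕ)
    (hdE : ∀ n : ℕ, ∀ S : Fin n → Fin m,
      (k + 1) ^ n ≤ (H.image fun h => h ∘ S).card → n ≤ dE)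
    (hkp : k < p) (v : Fin m → Fin p) (hv : v ∈ H) :
    (Finset.univ.filter fun i : Fin m => k ≤ (v i : ℕ)).card ≤ dE := by
  set T := Finset.univ.filter fun i : Fin m => k ≤ (v i : ℕ) with hT
  set n := T.card with hn
  set S : Fin n → Fin m := fun j => (T.orderIsoOfFin rfl j : Fin m) with hSdef
  have hS : Function.Injective S := fun a b h =>
    (T.orderIsoOfFin rfl).injective (Subtype.ext h)
  have hSmem : ∀ j, k ≤ (v (S j) : ℕ) := by
    intro j
    have h1 : ((T.orderIsoOfFin rfl) j : Fin m) ∈ T := (T.orderIsoOfFin rfl j).2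
    simp only [hT, Finset.mem_filter] at h1
    exact h1.2
  apply hdE n S
  have hp0 : 0 < p := lt_of_le_of_lt (Nat.zero_le k) hkp
  set G : (Fin n → Fin (k+1)) → (Fin m → Fin p) :=
    fun f => Function.extend S (fun j => Fin.castLE hkp (f j)) (fun _ => ⟨0, hp0⟩) with hG
  have hGS : ∀ f j, G f (S j) = Fin.castLE hkp (f j) := by
    intro f j
    exact hS.extend_apply _ _ j
  have hGH : ∀ f, G f ∈ H := by
    intro f
    apply hdc v hv
    intro i
    by_cases hi : ∃ j, S j = i
    · obtain ⟨j, rfl⟩ := hi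
      rw [hGS f j, Fin.le_def]
      have h1 : (f j : ℕ) ≤ k := Nat.lt_succ_iff.mp (f j).2
      have h2 := hSmem j
      simp only [Fin.coe_castLE]
      omega
    · rw [hG]
      simp only
      rw [Function.extend_apply' _ _ _ hi, Fin.le_def]
      exact Nat.zero_le _
  have hcard : (k + 1) ^ n ≤ (H.image fun h => h ∘ S).card := by
    have := Finset.card_le_card_of_injOn (s := (Finset.univ : Finset (Fin n → Fin (k+1))))
      (t := H.image fun h => h ∘ S) (fun f => G f ∘ S) ?_ ?_
    · calc (k+1)^n = (Finset.univ : Finset (Fin n → Fin (k+1))).card := by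
            simp [Fintype.card_fun]
        _ ≤ _ := this
    · intro f _
      exact Finset.mem_image.mpr ⟨G f, hGH f, rfl⟩
    · intro f₁ _ f₂ _ heq
      funext j
      have := congrFun heq j
      simp only [Function.comp_apply, hGS] at this
      exact Fin.castLE_injective _ this
  exact hcard

/-- For a finite nonempty downward-closed class `H ⊆ [p]^m` whose
`k`-exponential dimension is at most `dE`, the average `k`-degree of `H` is at
most `(k+1)·dE`, i.e. the sum of `k`-degrees is at most `(k+1)·dE·|H|`. -/
theorem stmt8 {m p k : ℕ} (H : Finset (Fin m → Fin p)) (hH : H.Nonempty)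
    (hdc : ∀ h ∈ H, ∀ g : Fin m → Fin p, (∀ i, g i ≤ h i) → g ∈ H)
    (dE : ℕ)
    (hdE : ∀ n : ℕ, ∀ S : Fin n → Fin m,
      (k + 1) ^ n ≤ (H.image fun h => h ∘ S).card → n ≤ dE) :
    ∑ v ∈ H, (Finset.univ.filter fun i : Fin m => k < (edge H i v).card).card
      ≤ (k + 1) * dE * H.card := by
  by_cases hkp : k < p
  · calc ∑ v ∈ H, (Finset.univ.filter fun i : Fin m => k < (edge H i v).card).card
        = ∑ v ∈ H, ∑ i : Fin m, if k < (edge H i v).card then 1 else 0 := by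
          simp only [Finset.card_filter]
      _ = ∑ i : Fin m, ∑ v ∈ H, if k < (edge H i v).card then 1 else 0 :=
          Finset.sum_comm
      _ = ∑ i : Fin m, (H.filter fun v => k < (edge H i v).card).card := by
          simp only [Finset.card_filter]
      _ ≤ ∑ i : Fin m, (H.filter fun v => k ≤ (v i : ℕ)).card * (k + 1) :=
          Finset.sum_le_sum fun i _ => step2 H hdc hkp i
      _ = (∑ i : Fin m, (H.filter fun v => k ≤ (v i : ℕ)).card) * (k + 1) :=
          (Finset.sum_mul _ _ _).symm
      _ = (∑ v ∈ H, (Finset.univ.filter fun i : Fin m => k ≤ (v i : ℕ)).card) * (k + 1) := by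
          congr 1
          calc ∑ i : Fin m, (H.filter fun v => k ≤ (v i : ℕ)).card
              = ∑ i : Fin m, ∑ v ∈ H, if k ≤ (v i : ℕ) then 1 else 0 := by
                simp only [Finset.card_filter]
            _ = ∑ v ∈ H, ∑ i : Fin m, if k ≤ (v i : ℕ) then 1 else 0 := Finset.sum_comm
            _ = ∑ v ∈ H, (Finset.univ.filter fun i : Fin m => k ≤ (v i : ℕ)).card := by
                simp only [Finset.card_filter]
      _ ≤ (dE * H.card) * (k + 1) := by
          apply Nat.mul_le_mul_right
          calc ∑ v ∈ H, (Finset.univ.filter fun i : Fin m => k ≤ (v i : ℕ)).card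
              ≤ ∑ _v ∈ H, dE := Finset.sum_le_sum fun v hv => step1 H hdc dE hdE hkp v hv
            _ = H.card * dE := by rw [Finset.sum_const, smul_eq_mul]
            _ = dE * H.card := Nat.mul_comm _ _
      _ = (k + 1) * dE * H.card := by ring
  · have hz : ∀ v ∈ H, (Finset.univ.filter fun i : Fin m => k < (edge H i v).card).card = 0 := by
      intro v _
      rw [Finset.card_eq_zero, Finset.filter_eq_empty_iff]
      intro i _
      have := edge_card_le H i v
      omega
    calc ∑ v ∈ H, (Finset.univ.filter fun i : Fin m => k < (edge H i v).card).card
        = ∑ _v ∈ H, 0 := Finset.sum_congr rfl hz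
      _ = 0 := by simp
      _ ≤ _ := Nat.zero_le _
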